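/- arXiv:1303.6011 — 5 statements merged into one kernel-verified Lean document; each statement's English description precedes it below -/
import Mathlib

section
/- For any polynomial p over a commutative ring and any n×n matrices X and H, evaluating p at the block matrix [[X, H],[0, X]] gives [[p(X), Dp(X)[H]],[0, p(X)]], where Dp(X)[H] = sum over k of a_k * (sum over i+j=k-1 of X^i H X^j) for p = sum a_k x^k. -/
open Matrix Finset

lemma fromBlocks_sum {R : Type} [CommRing R] {n : ℕ} {ι : Type*} (s : Finset ι)
    (A B C D : ι → Matrix (Fin n) (Fin n) R) :
    ∑ k ∈ s, Matrix.fromBlocks (A k) (B k) (C k) (D k) =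
      Matrix.fromBlocks (∑ k ∈ s, A k) (∑ k ∈ s, B k) (∑ k ∈ s, C k) (∑ k ∈ s, D k) := by
  classical
  induction s using Finset.induction with
  | empty => simp [Matrix.fromBlocks_zero]
  | insert _ _ h ih => simp [Finset.sum_insert h, ih, Matrix.fromBlocks_add]

lemma block_pow {R : Type} [CommRing R] {n : ℕ} (X H : Matrix (Fin n) (Fin n) R) (k : ℕ) :
    (Matrix.fromBlocks X H 0 X) ^ k =
      Matrix.fromBlocks (X ^ k) (∑ i ∈ Finset.range k, X ^ i * H * X ^ (k - 1 - i)) 0 (X ^ k) := by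
  induction k with
  | zero => simp [Matrix.fromBlocks_one]
  | succ k ih =>
    rw [pow_succ, ih, Matrix.fromBlocks_multiply]
    rw [Matrix.fromBlocks_inj]
    refine ⟨by simp [pow_succ], ?_, by simp, by simp [pow_succ]⟩
    · rw [Finset.sum_range_succ, add_comm]
      have : ∀ i ∈ Finset.range k, X ^ i * H * X ^ (k - 1 - i) * X
          = X ^ i * H * X ^ (k + 1 - 1 - i) := by
        intro i hi
        simp only [Finset.mem_range] at hi
        have h1 : k + 1 - 1 - i = (k - 1 - i) + 1 := by omega
        rw [h1, pow_succ, ← mul_assoc]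
      rw [Finset.sum_mul, Finset.sum_congr rfl this]
      simp

/-- Evaluating a polynomial `p` at the block matrix `[[X,H],[0,X]]` yields
`[[p(X), Dp(X)[H]],[0,p(X)]]` with `Dp(X)[H] = ∑_k a_k ∑_{i+j=k-1} X^i H X^j`. -/
theorem polynomial_block_derivative (R : Type) [CommRing R] (n : ℕ) (p : Polynomial R)
    (X H : Matrix (Fin n) (Fin n) R) :
    Polynomial.aeval (Matrix.fromBlocks X H 0 X) p =
      Matrix.fromBlocks (Polynomial.aeval X p)
        (∑ k ∈ Finset.range (p.natDegree + 1),
          p.coeff k • ∑ i ∈ Finset.range k, X ^ i * H * X ^ (k - 1 - i))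
        0 (Polynomial.aeval X p) := by
  rw [Polynomial.aeval_eq_sum_range, Polynomial.aeval_eq_sum_range]
  simp only [block_pow, Matrix.fromBlocks_smul, smul_zero]
  rw [fromBlocks_sum]
  simp
end

section
/- Let f be a function on pairs (tuples) of square matrices of all sizes that preserves direct sums (f(A ⊕ B) = f(A) ⊕ f(B)) and intertwines similarities (f(S⁻¹AS) = S⁻¹f(A)S for all invertible S). If there exist n×n matrices X and H with H ≠ 0 such that f([[X,H],[0,X]]) = [[f(X), 0],[0, f(X)]], then f is not injective. -/
/-- If a free map has vanishing derivative at some `X` in a direction `H ≠ 0`,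
then it is not injective. -/
theorem singular_derivative_not_injective (K : Type) [Field K]
    (f : ∀ (I : Type) [Fintype I] [DecidableEq I], Matrix I I K → Matrix I I K)
    (hsum : ∀ (I J : Type) [Fintype I] [DecidableEq I] [Fintype J] [DecidableEq J]
      (A : Matrix I I K) (B : Matrix J J K),
      f (I ⊕ J) (Matrix.fromBlocks A 0 0 B) = Matrix.fromBlocks (f I A) 0 0 (f J B))
    (hsim : ∀ (I : Type) [Fintype I] [DecidableEq I] (S A : Matrix I I K), IsUnit S →
      f I (S⁻¹ * A * S) = S⁻¹ * f I A * S)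
    (n : ℕ) (X H : Matrix (Fin n) (Fin n) K) (hH : H ≠ 0)
    (hder : f (Fin n ⊕ Fin n) (Matrix.fromBlocks X H 0 X) =
      Matrix.fromBlocks (f (Fin n) X) 0 0 (f (Fin n) X)) :
    ∃ (I : Type) (iF : Fintype I) (iD : DecidableEq I) (A B : Matrix I I K),
      A ≠ B ∧ @f I iF iD A = @f I iF iD B := by
  refine ⟨Fin n ⊕ Fin n, inferInstance, inferInstance,
    Matrix.fromBlocks X H 0 X, Matrix.fromBlocks X 0 0 X, ?_, ?_⟩
  · intro h
    apply hH
    have := congrArg Matrix.toBlocks₁₂ h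
    simpa [Matrix.toBlocks_fromBlocks₁₂] using this
  · rw [hder, hsum]
end

section
/- Let f be a free map (preserving direct sums and similarities) on all square matrices over a field. If for every matrix X the map H ↦ Df(X)[H] (defined by f([[X,H],[0,X]]) = [[f(X), Df(X)[H]],[0,f(X)]]) is injective, then f is injective: f(X₁) = f(X₂) implies X₁ = X₂ for matrices X₁, X₂ of the same size. -/
/-- Inverse function theorem, injectivity direction: if the derivative of a free map
is injective everywhere, the free map is injective. -/
theorem free_inverse_function_theorem_injective (K : Type) [Field K]
    (f : ∀ (I : Type) [Fintype I] [DecidableEq I], Matrix I I K → Matrix I I K)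
    (Df : ∀ (I : Type) [Fintype I] [DecidableEq I],
      Matrix I I K → Matrix I I K → Matrix I I K)
    (hsum : ∀ (I J : Type) [Fintype I] [DecidableEq I] [Fintype J] [DecidableEq J]
      (A : Matrix I I K) (B : Matrix J J K),
      f (I ⊕ J) (Matrix.fromBlocks A 0 0 B) = Matrix.fromBlocks (f I A) 0 0 (f J B))
    (hsim : ∀ (I : Type) [Fintype I] [DecidableEq I] (S A : Matrix I I K), IsUnit S →
      f I (S⁻¹ * A * S) = S⁻¹ * f I A * S)
    (hblock : ∀ (I : Type) [Fintype I] [DecidableEq I] (X H : Matrix I I K),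
      f (I ⊕ I) (Matrix.fromBlocks X H 0 X) =
        Matrix.fromBlocks (f I X) (Df I X H) 0 (f I X))
    (hDf : ∀ (I : Type) [Fintype I] [DecidableEq I] (X : Matrix I I K),
      Function.Injective (Df I X)) :
    ∀ (I : Type) [Fintype I] [DecidableEq I] (X₁ X₂ : Matrix I I K),
      f I X₁ = f I X₂ → X₁ = X₂ := by
  intro I _ _ X₁ X₂ hf
  -- Work on J = I ⊕ I
  set X : Matrix (I ⊕ I) (I ⊕ I) K := Matrix.fromBlocks X₁ 0 0 X₂ with hX
  set H : Matrix (I ⊕ I) (I ⊕ I) K := Matrix.fromBlocks 0 (X₁ - X₂) 0 0 with hH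
  set T : Matrix (I ⊕ I) (I ⊕ I) K := Matrix.fromBlocks 0 1 0 0 with hT
  set S : Matrix ((I ⊕ I) ⊕ (I ⊕ I)) ((I ⊕ I) ⊕ (I ⊕ I)) K :=
    Matrix.fromBlocks 1 T 0 1 with hS
  set S' : Matrix ((I ⊕ I) ⊕ (I ⊕ I)) ((I ⊕ I) ⊕ (I ⊕ I)) K :=
    Matrix.fromBlocks 1 (-T) 0 1 with hS'
  have hS'S : S' * S = 1 := by
    simp [hS, hS', Matrix.fromBlocks_multiply, Matrix.fromBlocks_one]
  have hSS' : S * S' = 1 := by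
    simp [hS, hS', Matrix.fromBlocks_multiply, Matrix.fromBlocks_one]
  have hU : IsUnit S := isUnit_iff_exists.mpr ⟨S', hSS', hS'S⟩
  have hinv : S⁻¹ = S' := Matrix.inv_eq_left_inv hS'S
  -- conjugation identity
  have hconj : S⁻¹ * (Matrix.fromBlocks X 0 0 X) * S = Matrix.fromBlocks X H 0 X := by
    rw [hinv]
    simp only [hS, hS', hX, hH, hT, Matrix.fromBlocks_multiply]
    simp [Matrix.fromBlocks_multiply, Matrix.fromBlocks_one, Matrix.fromBlocks_add, Matrix.fromBlocks_neg, sub_eq_add_neg]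
  -- f of the conjugated matrix, computed via hsim + hsum
  have key : f _ (Matrix.fromBlocks X H 0 X)
      = Matrix.fromBlocks (f _ X) 0 0 (f _ X) := by
    rw [← hconj, hsim _ S _ hU, hsum, hinv]
    have hfX : f (I ⊕ I) X = Matrix.fromBlocks (f I X₁) 0 0 (f I X₂) := by
      rw [hX, hsum]
    simp only [hS, hS', hT, hfX, Matrix.fromBlocks_multiply]
    simp [Matrix.fromBlocks_multiply, hf]
  -- compare blocks with hblock
  have h1 : Df _ X H = 0 := by
    have := key.symm.trans (hblock _ X H)
    have := congrArg Matrix.toBlocks₁₂ this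
    simpa [Matrix.toBlocks_fromBlocks₁₂] using this.symm
  have h0 : Df _ X 0 = 0 := by
    have := (hsum (I ⊕ I) (I ⊕ I) X X).symm.trans (hblock _ X (0 : Matrix (I ⊕ I) (I ⊕ I) K))
    have := congrArg Matrix.toBlocks₁₂ this
    simpa [Matrix.toBlocks_fromBlocks₁₂] using this.symm
  have hH0 : H = 0 := hDf _ X (h1.trans h0.symm)
  have := congrArg Matrix.toBlocks₁₂ hH0
  simp only [hH, Matrix.toBlocks_fromBlocks₁₂] at this
  have : X₁ - X₂ = 0 := by rw [this]; ext i j; rfl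
  exact sub_eq_zero.mp this
end

section
/- Let f be a free map on square matrices over a field, and suppose f(X₁) = f(X₂) for n×n matrices X₁, X₂. Then f applied to the block matrix [[X₁⊕X₂, E],[0, X₁⊕X₂]], where E is the 2n×2n matrix with X₁−X₂ in the upper-right n×n block and zeros elsewhere, equals the block diagonal matrix (f(X₁)⊕f(X₂)) ⊕ (f(X₁)⊕f(X₂)). -/
/-- If `f(X₁) = f(X₂)` for a free map `f`, then `f` of the block matrix
`[[X₁⊕X₂, E],[0, X₁⊕X₂]]` with `E` having `X₁ - X₂` in the upper-right block is
block diagonal `(f(X₁)⊕f(X₂)) ⊕ (f(X₁)⊕f(X₂))`. -/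
theorem free_map_equal_values_block (K : Type) [Field K]
    (f : ∀ (I : Type) [Fintype I] [DecidableEq I], Matrix I I K → Matrix I I K)
    (hsum : ∀ (I J : Type) [Fintype I] [DecidableEq I] [Fintype J] [DecidableEq J]
      (A : Matrix I I K) (B : Matrix J J K),
      f (I ⊕ J) (Matrix.fromBlocks A 0 0 B) = Matrix.fromBlocks (f I A) 0 0 (f J B))
    (hsim : ∀ (I : Type) [Fintype I] [DecidableEq I] (S A : Matrix I I K), IsUnit S →
      f I (S⁻¹ * A * S) = S⁻¹ * f I A * S)
    (n : ℕ) (X₁ X₂ : Matrix (Fin n) (Fin n) K)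
    (heq : f (Fin n) X₁ = f (Fin n) X₂) :
    f ((Fin n ⊕ Fin n) ⊕ (Fin n ⊕ Fin n))
        (Matrix.fromBlocks (Matrix.fromBlocks X₁ 0 0 X₂)
          (Matrix.fromBlocks 0 (X₁ - X₂) 0 0) 0 (Matrix.fromBlocks X₁ 0 0 X₂)) =
      Matrix.fromBlocks
        (Matrix.fromBlocks (f (Fin n) X₁) 0 0 (f (Fin n) X₂)) 0 0
        (Matrix.fromBlocks (f (Fin n) X₁) 0 0 (f (Fin n) X₂)) := by
  set P : Matrix (Fin n ⊕ Fin n) (Fin n ⊕ Fin n) K := Matrix.fromBlocks 0 1 0 0 with hP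
  set S : Matrix ((Fin n ⊕ Fin n) ⊕ (Fin n ⊕ Fin n)) ((Fin n ⊕ Fin n) ⊕ (Fin n ⊕ Fin n)) K :=
    Matrix.fromBlocks 1 P 0 1 with hS
  set S' : Matrix ((Fin n ⊕ Fin n) ⊕ (Fin n ⊕ Fin n)) ((Fin n ⊕ Fin n) ⊕ (Fin n ⊕ Fin n)) K :=
    Matrix.fromBlocks 1 (-P) 0 1 with hS'
  have hSS' : S * S' = 1 := by
    simp [hS, hS', Matrix.fromBlocks_multiply, Matrix.fromBlocks_one]
  have hS'S : S' * S = 1 := by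
    simp [hS, hS', Matrix.fromBlocks_multiply, Matrix.fromBlocks_one]
  have hunit : IsUnit S := ⟨⟨S, S', hSS', hS'S⟩, rfl⟩
  have hinv : S⁻¹ = S' := Matrix.inv_eq_right_inv hSS'
  set D₀ : Matrix (Fin n ⊕ Fin n) (Fin n ⊕ Fin n) K := Matrix.fromBlocks X₁ 0 0 X₂ with hD₀
  set D : Matrix ((Fin n ⊕ Fin n) ⊕ (Fin n ⊕ Fin n)) ((Fin n ⊕ Fin n) ⊕ (Fin n ⊕ Fin n)) K :=
    Matrix.fromBlocks D₀ 0 0 D₀ with hD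
  have hconj : S⁻¹ * D * S =
      Matrix.fromBlocks D₀ (Matrix.fromBlocks 0 (X₁ - X₂) 0 0) 0 D₀ := by
    rw [hinv]
    simp only [hS, hS', hD, hD₀, hP, Matrix.fromBlocks_multiply]
    simp [Matrix.fromBlocks_multiply, Matrix.mul_sub, Matrix.sub_mul, mul_sub, sub_mul,
      Matrix.fromBlocks_add, Matrix.fromBlocks_neg, sub_eq_add_neg]
  have hfD : f _ D = Matrix.fromBlocks (Matrix.fromBlocks (f (Fin n) X₁) 0 0 (f (Fin n) X₂)) 0 0
      (Matrix.fromBlocks (f (Fin n) X₁) 0 0 (f (Fin n) X₂)) := by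
    rw [hD, hsum, hD₀, hsum]
  have key := hsim _ S D hunit
  rw [hconj, hfD] at key
  rw [key, hinv]
  set F := f (Fin n) X₁ with hF
  have hcomm : (Matrix.fromBlocks F 0 0 F : Matrix (Fin n ⊕ Fin n) (Fin n ⊕ Fin n) K) * P
      = P * Matrix.fromBlocks F 0 0 F := by
    rw [hP]
    simp [Matrix.fromBlocks_multiply]
  have : F = f (Fin n) X₂ := heq
  rw [← this]
  simp only [hS, hS', Matrix.fromBlocks_multiply]
  simp [Matrix.fromBlocks_multiply]
  rw [hcomm]
  simp
end

section
/- Let X, Y be n×n complex matrices with 4‖X‖ + 2‖Y‖ < 1. Then the linear map (H,K) ↦ (H + HX + XH + [H,Y] + [X,K], K + [H,Y] + [X,K]) on pairs of n×n matrices is injective. -/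
open scoped Matrix.Norms.L2Operator

/-- If `4‖X‖ + 2‖Y‖ < 1` then the derivative of `f(X,Y) = (X + X² + [X,Y], Y + [X,Y])`
is injective. -/
theorem exotic_quadratic_derivative_injective (n : ℕ) (X Y : Matrix (Fin n) (Fin n) ℂ)
    (h : 4 * ‖X‖ + 2 * ‖Y‖ < 1) :
    Function.Injective (fun p : Matrix (Fin n) (Fin n) ℂ × Matrix (Fin n) (Fin n) ℂ =>
      (p.1 + p.1 * X + X * p.1 + (p.1 * Y - Y * p.1) + (X * p.2 - p.2 * X),
       p.2 + (p.1 * Y - Y * p.1) + (X * p.2 - p.2 * X))) := by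
  intro p q hpq
  simp only [Prod.mk.injEq] at hpq
  obtain ⟨h1, h2⟩ := hpq
  set H := p.1 - q.1 with hH
  set K := p.2 - q.2 with hK
  have e1 : H = -(H * X + X * H + (H * Y - Y * H) + (X * K - K * X)) := by
    have := sub_eq_zero.mpr h1
    rw [hH, hK]
    linear_combination (norm := noncomm_ring) this
  have e2 : K = -((H * Y - Y * H) + (X * K - K * X)) := by
    have := sub_eq_zero.mpr h2
    rw [hH, hK]
    linear_combination (norm := noncomm_ring) this
  have nX : (0:ℝ) ≤ ‖X‖ := norm_nonneg _
  have nY : (0:ℝ) ≤ ‖Y‖ := norm_nonneg _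
  have bH : ‖H‖ ≤ ‖H‖ * ‖X‖ + ‖X‖ * ‖H‖ + (‖H‖ * ‖Y‖ + ‖Y‖ * ‖H‖) + (‖X‖ * ‖K‖ + ‖K‖ * ‖X‖) := by
    calc ‖H‖ = ‖-(H * X + X * H + (H * Y - Y * H) + (X * K - K * X))‖ := by
          conv_lhs => rw [e1]
    _ = ‖H * X + X * H + (H * Y - Y * H) + (X * K - K * X)‖ := norm_neg _
    _ ≤ ‖H * X + X * H + (H * Y - Y * H)‖ + ‖X * K - K * X‖ := norm_add_le _ _
    _ ≤ ‖H * X + X * H‖ + ‖H * Y - Y * H‖ + ‖X * K - K * X‖ := by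
        gcongr; exact norm_add_le _ _
    _ ≤ (‖H * X‖ + ‖X * H‖) + (‖H * Y‖ + ‖Y * H‖) + (‖X * K‖ + ‖K * X‖) := by
        gcongr <;> first | exact norm_add_le _ _ | exact norm_sub_le _ _
    _ ≤ _ := by gcongr <;> exact norm_mul_le _ _
  have bK : ‖K‖ ≤ (‖H‖ * ‖Y‖ + ‖Y‖ * ‖H‖) + (‖X‖ * ‖K‖ + ‖K‖ * ‖X‖) := by
    calc ‖K‖ = ‖-(H * Y - Y * H + (X * K - K * X))‖ := by
          conv_lhs => rw [e2]
    _ = ‖H * Y - Y * H + (X * K - K * X)‖ := norm_neg _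
    _ ≤ ‖H * Y - Y * H‖ + ‖X * K - K * X‖ := norm_add_le _ _
    _ ≤ (‖H * Y‖ + ‖Y * H‖) + (‖X * K‖ + ‖K * X‖) := by
        gcongr <;> exact norm_sub_le _ _
    _ ≤ _ := by gcongr <;> exact norm_mul_le _ _
  have nH : (0:ℝ) ≤ ‖H‖ := norm_nonneg _
  have nK : (0:ℝ) ≤ ‖K‖ := norm_nonneg _
  have hmH : ‖H‖ ≤ max ‖H‖ ‖K‖ := le_max_left _ _
  have hmK : ‖K‖ ≤ max ‖H‖ ‖K‖ := le_max_right _ _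
  have hMnn : 0 ≤ max ‖H‖ ‖K‖ := le_trans nH hmH
  have hle : max ‖H‖ ‖K‖ ≤ (4 * ‖X‖ + 2 * ‖Y‖) * max ‖H‖ ‖K‖ := by
    rcases max_cases ‖H‖ ‖K‖ with ⟨hm, _⟩ | ⟨hm, _⟩ <;> rw [hm] <;>
      nlinarith [mul_le_mul_of_nonneg_left hmH nX, mul_le_mul_of_nonneg_left hmK nX,
        mul_le_mul_of_nonneg_left hmH nY, mul_le_mul_of_nonneg_left hmK nY]
  have hM0 : max ‖H‖ ‖K‖ ≤ 0 := by
    by_contra hc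
    push_neg at hc
    nlinarith
  have hH0 : ‖H‖ = 0 := le_antisymm (hmH.trans hM0) nH
  have hK0 : ‖K‖ = 0 := le_antisymm (hmK.trans hM0) nK
  have HH : H = 0 := norm_eq_zero.mp hH0
  have KK : K = 0 := norm_eq_zero.mp hK0
  have : p.1 = q.1 := sub_eq_zero.mp HH
  have : p.2 = q.2 := sub_eq_zero.mp KK
  exact Prod.ext (sub_eq_zero.mp HH) (sub_eq_zero.mp KK)
end
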